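/- Let K₁ and K₂ be nonempty closed convex sets in ℝⁿ, let r and m be integers with 0 ≤ r ≤ m − 3 ≤ n − 4, and let S ⊂ ℝⁿ be a linear subspace of dimension r. Then K₁ and K₂ are homothetic if and only if for every m-dimensional plane L of ℝⁿ whose direction subspace contains S (i.e., every m-dimensional plane containing a translate of S) the orthogonal projections π_L(K₁) and π_L(K₂) are homothetic (where the homothety ratio may depend on L). -/

import Mathlib

/-- Nonempty sets `X₁` and `X₂` in `ℝⁿ` are *homothetic* provided
`X₁ = z + λ • X₂` for some point `z` and some scalar `λ ≠ 0`. -/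
def Homothetic {n : ℕ} (X₁ X₂ : Set (EuclideanSpace ℝ (Fin n))) : Prop :=
  ∃ (z : EuclideanSpace ℝ (Fin n)) (l : ℝ), l ≠ 0 ∧ X₁ = (fun x => z + l • x) '' X₂

/-- The orthogonal projection of `ℝⁿ` onto the plane `p + L`. -/
noncomputable def planeProj {n : ℕ} (p : EuclideanSpace ℝ (Fin n))
    (L : Submodule ℝ (EuclideanSpace ℝ (Fin n))) (x : EuclideanSpace ℝ (Fin n)) :
    EuclideanSpace ℝ (Fin n) :=
  p + (L.orthogonalProjectionOnto (x - p) : EuclideanSpace ℝ (Fin n))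


set_option linter.unusedSectionVars false
set_option linter.unusedVariables false
set_option maxHeartbeats 1000000

namespace HomProj

local notation "⟪" x ", " y "⟫" => @inner ℝ _ _ x y

abbrev Euc (n : ℕ) := EuclideanSpace ℝ (Fin n)

section Algebra

variable {V : Type*} [AddCommGroup V] [Module ℝ V]



/-- span of three vectors -/
def sp3 (x y z : V) : Submodule ℝ V := Submodule.span ℝ {x, y, z}

lemma mem_sp3₁ (x y z : V) : x ∈ sp3 x y z := Submodule.subset_span (by simp)
lemma mem_sp3₂ (x y z : V) : y ∈ sp3 x y z := Submodule.subset_span (by simp)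
lemma mem_sp3₃ (x y z : V) : z ∈ sp3 x y z := Submodule.subset_span (by simp)

/-- additivity defect -/
def dlt (F : V → ℝ) (x y : V) : ℝ := F x + F y - F (x + y)

lemma dlt_comm (F : V → ℝ) (x y : V) : dlt F x y = dlt F y x := by
  simp only [dlt]; rw [add_comm y x]; ring

lemma dlt_shift (F : V → ℝ) (x c y : V) :
    dlt F (x + c) y = dlt F x y - dlt F x c + dlt F (x + y) c := by
  simp only [dlt]; rw [show x + c + y = x + y + c by abel]; ring

/-- Sign-coherence lemma: if on every 3-generated subspace either `o` or `s`
has vanishing additivity defects, then one of them has globally vanishing defects. -/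
lemma sign_lemma (o s : V → ℝ)
    (hwin : ∀ x y w : V, (∀ p ∈ sp3 x y w, ∀ q ∈ sp3 x y w, dlt o p q = 0) ∨
                         (∀ p ∈ sp3 x y w, ∀ q ∈ sp3 x y w, dlt s p q = 0)) :
    (∀ x y, dlt o x y = 0) ∨ (∀ x y, dlt s x y = 0) := by
  by_contra h
  push_neg at h
  obtain ⟨⟨bx, bY, hbo⟩, ⟨sx, sy, hss⟩⟩ := h
  -- windows based at (sx,sy,·) are o-sided
  have oS : ∀ c : V, ∀ p ∈ sp3 sx sy c, ∀ q ∈ sp3 sx sy c, dlt o p q = 0 := by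
    intro c
    rcases hwin sx sy c with h' | h'
    · exact h'
    · exact absurd (h' sx (mem_sp3₁ _ _ _) sy (mem_sp3₂ _ _ _)) hss
  -- windows based at (bx,bY,·) are s-sided
  have sB : ∀ c : V, ∀ p ∈ sp3 bx bY c, ∀ q ∈ sp3 bx bY c, dlt s p q = 0 := by
    intro c
    rcases hwin bx bY c with h' | h'
    · exact absurd (h' bx (mem_sp3₁ _ _ _) bY (mem_sp3₂ _ _ _)) hbo
    · exact h'
  set ψ : V → ℝ := fun x => s x - o x with hψ
  have dltψ : ∀ x y, dlt ψ x y = dlt s x y - dlt o x y := by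
    intro x y; simp only [dlt, hψ]; ring
  set u : V := sx + bx with hu
  -- z1 : dlt ψ sx bx = 0
  have z1o : dlt o sx bx = 0 :=
    oS bx sx (mem_sp3₁ _ _ _) bx (mem_sp3₃ _ _ _)
  have z1s : dlt s sx bx = 0 :=
    sB sx sx (mem_sp3₃ _ _ _) bx (mem_sp3₁ _ _ _)
  have z1 : dlt ψ sx bx = 0 := by rw [dltψ, z1o, z1s]; ring
  -- z4 : dlt ψ sx (bx+bY) = 0
  have z4o : dlt o sx (bx + bY) = 0 :=
    oS (bx + bY) sx (mem_sp3₁ _ _ _) (bx + bY) (mem_sp3₃ _ _ _)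
  have z4s : dlt s sx (bx + bY) = 0 :=
    sB sx sx (mem_sp3₃ _ _ _) (bx + bY)
      ((sp3 bx bY sx).add_mem (mem_sp3₁ _ _ _) (mem_sp3₂ _ _ _))
  have z4 : dlt ψ sx (bx + bY) = 0 := by rw [dltψ, z4o, z4s]; ring
  -- z5 : dlt ψ (sx+sy) bx = 0
  have z5o : dlt o (sx + sy) bx = 0 :=
    oS bx (sx + sy) ((sp3 sx sy bx).add_mem (mem_sp3₁ _ _ _) (mem_sp3₂ _ _ _))
      bx (mem_sp3₃ _ _ _)
  have z5s : dlt s (sx + sy) bx = 0 :=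
    sB (sx + sy) (sx + sy) (mem_sp3₃ _ _ _) bx (mem_sp3₁ _ _ _)
  have z5 : dlt ψ (sx + sy) bx = 0 := by rw [dltψ, z5o, z5s]; ring
  -- δ₁ = dlt ψ bx bY = - dlt o bx bY ≠ 0
  have zsb : dlt s bx bY = 0 := sB bx bx (mem_sp3₁ _ _ _) bY (mem_sp3₂ _ _ _)
  have hδ₁ : dlt ψ bx bY = - dlt o bx bY := by rw [dltψ, zsb]; ring
  -- δ₀ = dlt ψ sx sy = dlt s sx sy ≠ 0
  have zos : dlt o sx sy = 0 := oS sx sx (mem_sp3₁ _ _ _) sy (mem_sp3₂ _ _ _)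
  have hδ₀ : dlt ψ sx sy = dlt s sx sy := by rw [dltψ, zos]; ring
  -- algebra: dlt ψ u bY = dlt ψ bx bY
  have alg1 : dlt ψ u bY = dlt ψ bx bY := by
    have e1 : ψ (sx + bx) = ψ sx + ψ bx := by
      have := z1; simp only [dlt] at this; linarith
    have e2 : ψ (sx + bx + bY) = ψ sx + ψ (bx + bY) := by
      have := z4; simp only [dlt] at this
      rw [show sx + bx + bY = sx + (bx + bY) by abel]; linarith
    simp only [dlt, hu]; rw [e1, e2]; ring
  -- algebra : dlt ψ u sy = dlt ψ sx sy
  have alg2 : dlt ψ u sy = dlt ψ sx sy := by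
    have e1 : ψ (sx + bx) = ψ sx + ψ bx := by
      have := z1; simp only [dlt] at this; linarith
    have e2 : ψ (sx + bx + sy) = ψ (sx + sy) + ψ bx := by
      have := z5; simp only [dlt] at this
      rw [show sx + bx + sy = sx + sy + bx by abel]; linarith
    simp only [dlt, hu]; rw [e1, e2]; ring
  -- dlt s u bY = 0
  have hsuby : dlt s u bY = 0 :=
    sB sx u ((sp3 bx bY sx).add_mem (mem_sp3₃ _ _ _) (mem_sp3₁ _ _ _))
      bY (mem_sp3₂ _ _ _)
  -- hence dlt o u bY ≠ 0
  have houby : dlt o u bY ≠ 0 := by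
    have h1 : dlt ψ u bY = - dlt o u bY := by rw [dltψ, hsuby]; ring
    rw [alg1, hδ₁] at h1
    intro h0; rw [h0] at h1; exact hbo (by linarith)
  -- window sp3 u bY sy must be s-sided
  have sfin : ∀ p ∈ sp3 u bY sy, ∀ q ∈ sp3 u bY sy, dlt s p q = 0 := by
    rcases hwin u bY sy with h' | h'
    · exact absurd (h' u (mem_sp3₁ _ _ _) bY (mem_sp3₂ _ _ _)) houby
    · exact h'
  have hsusy : dlt s u sy = 0 := sfin u (mem_sp3₁ _ _ _) sy (mem_sp3₃ _ _ _)
  have housy : dlt o u sy = 0 :=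
    oS bx u ((sp3 sx sy bx).add_mem (mem_sp3₁ _ _ _) (mem_sp3₃ _ _ _))
      sy (mem_sp3₂ _ _ _)
  have : dlt ψ u sy = 0 := by rw [dltψ, hsusy, housy]; ring
  rw [alg2, hδ₀] at this
  exact hss this


/-- Modulus-coherence lemma with anchors. -/
lemma modulus_lemma (F G : V → ℝ) (D : Set V)
    (hDadd : ∀ {x y}, x ∈ D → y ∈ D → x + y ∈ D)
    (A : Set V) (hA : A.Nonempty) (hAD : A ⊆ D)
    (hAabs : ∀ {a d}, a ∈ A → d ∈ D → a + d ∈ A)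
    (hGnn : ∀ x ∈ D, ∀ y ∈ D, 0 ≤ dlt G x y)
    (hwin : ∀ x y a : V, a ∈ A → ∃ l : ℝ, 0 < l ∧
      ∀ p ∈ D, ∀ q ∈ D, p ∈ sp3 x y a → q ∈ sp3 x y a → dlt F p q = l * dlt G p q) :
    ∃ l : ℝ, 0 < l ∧ ∀ x ∈ D, ∀ y ∈ D, dlt F x y = l * dlt G x y := by
  obtain ⟨a₀, ha₀⟩ := hA
  have cross : ∀ x y a : V, a ∈ A → ∀ p ∈ D, ∀ q ∈ D, ∀ p' ∈ D, ∀ q' ∈ D,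
      p ∈ sp3 x y a → q ∈ sp3 x y a → p' ∈ sp3 x y a → q' ∈ sp3 x y a →
      dlt F p q * dlt G p' q' = dlt F p' q' * dlt G p q := by
    intro x y a ha p hp q hq p' hp' q' hq' m1 m2 m3 m4
    obtain ⟨l, -, hrel⟩ := hwin x y a ha
    rw [hrel p hp q hq m1 m2, hrel p' hp' q' hq' m3 m4]; ring
  have Fzero : ∀ x ∈ D, ∀ y ∈ D, dlt G x y = 0 → dlt F x y = 0 := by
    intro x hx y hy h0
    obtain ⟨l, -, hrel⟩ := hwin x y a₀ ha₀
    rw [hrel x hx y hy (mem_sp3₁ _ _ _) (mem_sp3₂ _ _ _), h0, mul_zero]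
  have Fpos : ∀ x ∈ D, ∀ y ∈ D, 0 < dlt G x y → 0 < dlt F x y := by
    intro x hx y hy h0
    obtain ⟨l, hl, hrel⟩ := hwin x y a₀ ha₀
    rw [hrel x hx y hy (mem_sp3₁ _ _ _) (mem_sp3₂ _ _ _)]
    exact mul_pos hl h0
  -- Step 1: produce an anchored pair cross-linked to a given positive pair
  have step1 : ∀ u ∈ D, ∀ v ∈ D, 0 < dlt G u v → ∃ a ∈ A, ∃ w ∈ D,
      0 < dlt G a w ∧ dlt F a w * dlt G u v = dlt F u v * dlt G a w := by
    intro u hu v hv hpos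
    by_cases hc : dlt G u a₀ = 0
    · refine ⟨a₀ + u, hAabs ha₀ hu, v, hv, ?_, ?_⟩
      · have hsh := dlt_shift G u a₀ v
        rw [show a₀ + u = u + a₀ by abel, hsh, hc]
        have := hGnn (u + v) (hDadd hu hv) a₀ (hAD ha₀)
        linarith
      · exact cross u v a₀ ha₀ (a₀ + u) (hDadd (hAD ha₀) hu) v hv u hu v hv
          ((sp3 u v a₀).add_mem (mem_sp3₃ _ _ _) (mem_sp3₁ _ _ _)) (mem_sp3₂ _ _ _)
          (mem_sp3₁ _ _ _) (mem_sp3₂ _ _ _)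
    · refine ⟨a₀, ha₀, u, hu, ?_, ?_⟩
      · have h1 := hGnn u hu a₀ (hAD ha₀)
        rw [dlt_comm G a₀ u]
        exact lt_of_le_of_ne h1 (Ne.symm hc)
      · exact cross u v a₀ ha₀ a₀ (hAD ha₀) u hu u hu v hv
          (mem_sp3₃ _ _ _) (mem_sp3₁ _ _ _) (mem_sp3₁ _ _ _) (mem_sp3₂ _ _ _)
  -- Step 2: two anchored positive pairs are proportional
  have step2 : ∀ a₁ ∈ A, ∀ w₁ ∈ D, ∀ a₂ ∈ A, ∀ w₂ ∈ D,
      0 < dlt G a₁ w₁ → 0 < dlt G a₂ w₂ →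
      dlt F a₁ w₁ * dlt G a₂ w₂ = dlt F a₂ w₂ * dlt G a₁ w₁ := by
    intro a₁ ha₁ w₁ hw₁ a₂ ha₂ w₂ hw₂ h₁ h₂
    have ha₁D := hAD ha₁; have ha₂D := hAD ha₂
    by_cases c1 : dlt G a₂ a₁ = 0
    · by_cases c2 : dlt G a₂ w₁ = 0
      · by_cases c3 : dlt G a₂ (a₁ + w₁) = 0
        · -- mixing case
          set p : V := a₁ + a₂ with hp
          have hpA : p ∈ A := hAabs ha₁ ha₂D
          have hpD : p ∈ D := hAD hpA
          have hpw1 : dlt G p w₁ = dlt G a₁ w₁ := by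
            have hsh := dlt_shift G a₁ a₂ w₁
            rw [hp, hsh, dlt_comm G a₁ a₂, c1, dlt_comm G (a₁ + w₁) a₂, c3]
            ring
          have hpw2 : 0 < dlt G p w₂ := by
            have hsh := dlt_shift G a₂ a₁ w₂
            rw [show p = a₂ + a₁ by rw [hp]; abel, hsh, c1]
            have := hGnn (a₂ + w₂) (hDadd ha₂D hw₂) a₁ ha₁D
            linarith
          -- eq1 : X p w₁ = X a₁ w₁  via window sp3 a₁ w₁ a₂
          have eq1 : dlt F p w₁ * dlt G a₁ w₁ = dlt F a₁ w₁ * dlt G p w₁ :=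
            cross a₁ w₁ a₂ ha₂ p hpD w₁ hw₁ a₁ ha₁D w₁ hw₁
              ((sp3 a₁ w₁ a₂).add_mem (mem_sp3₁ _ _ _) (mem_sp3₃ _ _ _)) (mem_sp3₂ _ _ _)
              (mem_sp3₁ _ _ _) (mem_sp3₂ _ _ _)
          have eq1' : dlt F p w₁ = dlt F a₁ w₁ := by
            rw [hpw1] at eq1
            exact mul_right_cancel₀ (ne_of_gt h₁) eq1
          -- eq2 : via window sp3 a₂ w₂ a₁
          have eq2 : dlt F p w₂ * dlt G a₂ w₂ = dlt F a₂ w₂ * dlt G p w₂ :=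
            cross a₂ w₂ a₁ ha₁ p hpD w₂ hw₂ a₂ ha₂D w₂ hw₂
              (by rw [show p = a₂ + a₁ by rw [hp]; abel]
                  exact (sp3 a₂ w₂ a₁).add_mem (mem_sp3₁ _ _ _) (mem_sp3₃ _ _ _))
              (mem_sp3₂ _ _ _) (mem_sp3₁ _ _ _) (mem_sp3₂ _ _ _)
          -- eq3 : via window sp3 w₁ w₂ p
          have eq3 : dlt F p w₁ * dlt G p w₂ = dlt F p w₂ * dlt G p w₁ :=
            cross w₁ w₂ p hpA p hpD w₁ hw₁ p hpD w₂ hw₂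
              (mem_sp3₃ _ _ _) (mem_sp3₁ _ _ _) (mem_sp3₃ _ _ _) (mem_sp3₂ _ _ _)
          rw [eq1', hpw1] at eq3
          -- eq3 : X a₁ w₁ * Y p w₂ = X p w₂ * Y a₁ w₁
          apply mul_right_cancel₀ (ne_of_gt hpw2)
          linear_combination dlt G a₂ w₂ * eq3 + dlt G a₁ w₁ * eq2
        · -- c3 ≠ 0
          have hc3 : 0 < dlt G a₂ (a₁ + w₁) := by
            have := hGnn a₂ ha₂D (a₁ + w₁) (hDadd ha₁D hw₁)
            exact lt_of_le_of_ne this (Ne.symm c3)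
          have eq1 : dlt F a₁ w₁ * dlt G a₂ (a₁ + w₁) = dlt F a₂ (a₁ + w₁) * dlt G a₁ w₁ :=
            cross a₁ w₁ a₂ ha₂ a₁ ha₁D w₁ hw₁ a₂ ha₂D (a₁ + w₁) (hDadd ha₁D hw₁)
              (mem_sp3₁ _ _ _) (mem_sp3₂ _ _ _) (mem_sp3₃ _ _ _)
              ((sp3 a₁ w₁ a₂).add_mem (mem_sp3₁ _ _ _) (mem_sp3₂ _ _ _))
          have eq2 : dlt F a₂ w₂ * dlt G a₂ (a₁ + w₁) = dlt F a₂ (a₁ + w₁) * dlt G a₂ w₂ :=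
            cross (a₁ + w₁) w₂ a₂ ha₂ a₂ ha₂D w₂ hw₂ a₂ ha₂D (a₁ + w₁) (hDadd ha₁D hw₁)
              (mem_sp3₃ _ _ _) (mem_sp3₂ _ _ _) (mem_sp3₃ _ _ _) (mem_sp3₁ _ _ _)
          apply mul_right_cancel₀ c3
          linear_combination dlt G a₂ w₂ * eq1 - dlt G a₁ w₁ * eq2
      · -- c2 ≠ 0
        have eq1 : dlt F a₁ w₁ * dlt G a₂ w₁ = dlt F a₂ w₁ * dlt G a₁ w₁ :=
          cross a₁ w₁ a₂ ha₂ a₁ ha₁D w₁ hw₁ a₂ ha₂D w₁ hw₁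
            (mem_sp3₁ _ _ _) (mem_sp3₂ _ _ _) (mem_sp3₃ _ _ _) (mem_sp3₂ _ _ _)
        have eq2 : dlt F a₂ w₂ * dlt G a₂ w₁ = dlt F a₂ w₁ * dlt G a₂ w₂ :=
          cross w₁ w₂ a₂ ha₂ a₂ ha₂D w₂ hw₂ a₂ ha₂D w₁ hw₁
            (mem_sp3₃ _ _ _) (mem_sp3₂ _ _ _) (mem_sp3₃ _ _ _) (mem_sp3₁ _ _ _)
        apply mul_right_cancel₀ c2
        linear_combination dlt G a₂ w₂ * eq1 - dlt G a₁ w₁ * eq2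
    · -- c1 ≠ 0
      have eq1 : dlt F a₁ w₁ * dlt G a₂ a₁ = dlt F a₂ a₁ * dlt G a₁ w₁ :=
        cross a₁ w₁ a₂ ha₂ a₁ ha₁D w₁ hw₁ a₂ ha₂D a₁ ha₁D
          (mem_sp3₁ _ _ _) (mem_sp3₂ _ _ _) (mem_sp3₃ _ _ _) (mem_sp3₁ _ _ _)
      have eq2 : dlt F a₂ w₂ * dlt G a₂ a₁ = dlt F a₂ a₁ * dlt G a₂ w₂ :=
        cross a₂ w₂ a₁ ha₁ a₂ ha₂D w₂ hw₂ a₂ ha₂D a₁ ha₁D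
          (mem_sp3₁ _ _ _) (mem_sp3₂ _ _ _) (mem_sp3₁ _ _ _) (mem_sp3₃ _ _ _)
      apply mul_right_cancel₀ c1
      linear_combination dlt G a₂ w₂ * eq1 - dlt G a₁ w₁ * eq2
  -- assemble
  by_cases hz : ∀ x ∈ D, ∀ y ∈ D, dlt G x y = 0
  · refine ⟨1, one_pos, fun x hx y hy => ?_⟩
    rw [Fzero x hx y hy (hz x hx y hy), hz x hx y hy, mul_zero]
  · push_neg at hz
    obtain ⟨u₀, hu₀, v₀, hv₀, hne⟩ := hz
    have hY₀ : 0 < dlt G u₀ v₀ := lt_of_le_of_ne (hGnn u₀ hu₀ v₀ hv₀) (Ne.symm hne)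
    have hX₀ : 0 < dlt F u₀ v₀ := Fpos u₀ hu₀ v₀ hv₀ hY₀
    refine ⟨dlt F u₀ v₀ / dlt G u₀ v₀, div_pos hX₀ hY₀, fun x hx y hy => ?_⟩
    by_cases h0 : dlt G x y = 0
    · rw [Fzero x hx y hy h0, h0, mul_zero]
    · have hYxy : 0 < dlt G x y := lt_of_le_of_ne (hGnn x hx y hy) (Ne.symm h0)
      obtain ⟨a, haA, w, hwD, hYaw, link1⟩ := step1 x hx y hy hYxy
      obtain ⟨a', ha'A, w', hw'D, hYa'w', link2⟩ := step1 u₀ hu₀ v₀ hv₀ hY₀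
      have st := step2 a haA w hwD a' ha'A w' hw'D hYaw hYa'w'
      -- conclude: dlt F x y * dlt G u₀ v₀ = dlt F u₀ v₀ * dlt G x y
      have key : dlt F x y * dlt G u₀ v₀ = dlt F u₀ v₀ * dlt G x y := by
        apply mul_right_cancel₀ (ne_of_gt (mul_pos hYaw hYa'w'))
        linear_combination (-(dlt G u₀ v₀ * dlt G a' w')) * link1 +
          (dlt G x y * dlt G a w) * link2 + (dlt G x y * dlt G u₀ v₀) * st
      field_simp
      linear_combination key


end Algebra

section Geom

open Finset Pointwise

variable {n : ℕ}
lemma cone_ext [DecidableEq (Euc n)] (D : Set (Euc n)) (hD0 : (0 : Euc n) ∈ D)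
    (hadd : ∀ {x y}, x ∈ D → y ∈ D → x + y ∈ D)
    (hsmul : ∀ {t : ℝ}, 0 ≤ t → ∀ {x}, x ∈ D → t • x ∈ D)
    (o : Euc n → ℝ)
    (hoadd : ∀ x ∈ D, ∀ y ∈ D, o (x + y) = o x + o y)
    (hohom : ∀ t : ℝ, 0 ≤ t → ∀ x ∈ D, o (t • x) = t * o x) :
    ∃ z : Euc n, ∀ x ∈ D, o x = ⟪z, x⟫ := by
  have ho0 : o 0 = 0 := by
    have := hohom 0 le_rfl 0 hD0
    simpa using this
  -- sums of nonneg combinations from D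
  have sum_lemma : ∀ (s : Finset (Euc n)) (f : Euc n → ℝ),
      (∀ v ∈ s, v ∈ D) → (∀ v ∈ s, 0 ≤ f v) →
      (∑ v ∈ s, f v • v) ∈ D ∧ o (∑ v ∈ s, f v • v) = ∑ v ∈ s, f v * o v := by
    intro s
    induction s using Finset.induction_on with
    | empty => intro f _ _; simpa [ho0] using hD0
    | @insert a t ha ih =>
      intro f hDm hfm
      have h1 : ∀ v ∈ t, v ∈ D := fun v hv => hDm v (mem_insert_of_mem hv)
      have h2 : ∀ v ∈ t, 0 ≤ f v := fun v hv => hfm v (mem_insert_of_mem hv)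
      obtain ⟨hm, he⟩ := ih f h1 h2
      have hfa : f a • a ∈ D :=
        hsmul (hfm a (mem_insert_self a t)) (hDm a (mem_insert_self a t))
      rw [Finset.sum_insert ha, Finset.sum_insert ha]
      refine ⟨hadd hfa hm, ?_⟩
      rw [hoadd _ hfa _ hm, he,
        hohom (f a) (hfm a (mem_insert_self a t)) a (hDm a (mem_insert_self a t))]
  -- extract a linearly independent spanning subset of D
  obtain ⟨b, hbD, hspan, hli⟩ := exists_linearIndependent ℝ D
  -- value of o on any real combination of elements of b
  have main : ∀ (l : Euc n →₀ ℝ), ↑l.support ⊆ b → ∀ x ∈ D,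
      (l.sum fun v c => c • v) = x → o x = ∑ v ∈ l.support, l v * o v := by
    intro l hsupp x hx hsum
    set s := l.support with hs
    have hsD : ∀ v ∈ s, v ∈ D := fun v hv => hbD (hsupp hv)
    set fp : Euc n → ℝ := fun v => max (l v) 0 with hfp
    set fm : Euc n → ℝ := fun v => max (-(l v)) 0 with hfm
    have hfpnn : ∀ v ∈ s, 0 ≤ fp v := fun v _ => le_max_right _ _
    have hfmnn : ∀ v ∈ s, 0 ≤ fm v := fun v _ => le_max_right _ _
    have hdiff : ∀ v, fp v - fm v = l v := by
      intro v; simp only [hfp, hfm]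
      rcases le_total (l v) 0 with h | h
      · rw [max_eq_right h, max_eq_left (by linarith)]; ring
      · rw [max_eq_left h, max_eq_right (by linarith)]; ring
    obtain ⟨hmp, hep⟩ := sum_lemma s fp hsD hfpnn
    obtain ⟨hmm, hem⟩ := sum_lemma s fm hsD hfmnn
    have hsplit : (∑ v ∈ s, fp v • v) = x + ∑ v ∈ s, fm v • v := by
      have : (∑ v ∈ s, fp v • v) - (∑ v ∈ s, fm v • v) = x := by
        rw [← Finset.sum_sub_distrib]
        have : ∀ v ∈ s, fp v • v - fm v • v = l v • v := by
          intro v _; rw [← sub_smul, hdiff]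
        rw [Finset.sum_congr rfl this, ← hsum]
        rfl
      linear_combination (norm := module) this
    have := hoadd x hx _ hmm
    rw [← hsplit, hep] at this
    rw [hem] at this
    have : o x = ∑ v ∈ s, fp v * o v - ∑ v ∈ s, fm v * o v := by linarith
    rw [this, ← Finset.sum_sub_distrib]
    apply Finset.sum_congr rfl
    intro v _
    rw [← sub_mul, hdiff]
  -- build linear functional agreeing with o on b
  have hbuniv : b ⊆ (Set.univ : Set (Euc n)) := Set.subset_univ b
  let bas : Module.Basis _ ℝ (Euc n) := Module.Basis.extend hli
  let φ : Euc n →ₗ[ℝ] ℝ := bas.constr ℝ (fun i => o ↑i)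
  have hφb : ∀ v ∈ b, φ v = o v := by
    intro v hv
    have hmem : v ∈ LinearIndepOn.extend (show LinearIndepOn ℝ id b from hli) (Set.subset_univ _) := Module.Basis.subset_extend hli hv
    have : bas ⟨v, hmem⟩ = v := Module.Basis.extend_apply_self hli ⟨v, hmem⟩
    calc φ v = φ (bas ⟨v, hmem⟩) := by rw [this]
    _ = o v := by rw [Module.Basis.constr_basis]
  -- φ agrees with o on D
  have hφD : ∀ x ∈ D, φ x = o x := by
    intro x hx
    have hx' : x ∈ Submodule.span ℝ b := by
      rw [hspan]; exact Submodule.subset_span hx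
    obtain ⟨l, hsupp, hsum⟩ := Submodule.mem_span_set.mp hx'
    rw [main l hsupp x hx hsum, ← hsum]
    have : (l.sum fun v c => c • v) = ∑ v ∈ l.support, l v • v := rfl
    rw [this, map_sum]
    apply Finset.sum_congr rfl
    intro v hv
    rw [map_smul, hφb v (hsupp hv), smul_eq_mul]
  -- represent φ by a vector
  refine ⟨(InnerProductSpace.toDual ℝ (Euc n)).symm (LinearMap.toContinuousLinearMap φ),
    fun x hx => ?_⟩
  rw [InnerProductSpace.toDual_symm_apply]
  exact (hφD x hx).symm


/-- scalar shadow of a set in direction u -/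
def shadow (K : Set (Euc n)) (u : Euc n) : Set ℝ := (fun x => ⟪x, u⟫) '' K

lemma shadow_nonempty {K : Set (Euc n)} (hK : K.Nonempty) (u : Euc n) :
    (shadow K u).Nonempty := hK.image _

/-- sup of shadow -/
noncomputable def sf (K : Set (Euc n)) (u : Euc n) : ℝ := sSup (shadow K u)

/-- domain: directions of bounded-above shadow -/
def Dom (K : Set (Euc n)) : Set (Euc n) := {u | BddAbove (shadow K u)}

lemma shadow_zero {K : Set (Euc n)} (hK : K.Nonempty) : shadow K 0 = {0} := by
  apply Set.eq_singleton_iff_nonempty_unique_mem.mpr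
  refine ⟨shadow_nonempty hK 0, ?_⟩
  rintro t ⟨x, -, rfl⟩
  simp

lemma zero_mem_Dom {K : Set (Euc n)} (hK : K.Nonempty) : (0 : Euc n) ∈ Dom K := by
  rw [Dom, Set.mem_setOf_eq, shadow_zero hK]
  exact bddAbove_singleton

lemma sf_zero {K : Set (Euc n)} (hK : K.Nonempty) : sf K 0 = 0 := by
  rw [sf, shadow_zero hK, csSup_singleton]

lemma mem_shadow_le_sf {K : Set (Euc n)} {u : Euc n} (hu : u ∈ Dom K)
    {t : ℝ} (ht : t ∈ shadow K u) : t ≤ sf K u := le_csSup hu ht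

lemma Dom_add {K : Set (Euc n)} (hK : K.Nonempty) {u v : Euc n}
    (hu : u ∈ Dom K) (hv : v ∈ Dom K) : u + v ∈ Dom K := by
  refine ⟨sf K u + sf K v, ?_⟩
  rintro t ⟨x, hx, rfl⟩
  have h1 : ⟪x, u⟫ ≤ sf K u := mem_shadow_le_sf hu ⟨x, hx, rfl⟩
  have h2 : ⟪x, v⟫ ≤ sf K v := mem_shadow_le_sf hv ⟨x, hx, rfl⟩
  show ⟪x, u + v⟫ ≤ sf K u + sf K v
  rw [inner_add_right]; exact add_le_add h1 h2

lemma sf_subadd {K : Set (Euc n)} (hK : K.Nonempty) {u v : Euc n}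
    (hu : u ∈ Dom K) (hv : v ∈ Dom K) : sf K (u + v) ≤ sf K u + sf K v := by
  apply csSup_le (shadow_nonempty hK _)
  rintro t ⟨x, hx, rfl⟩
  have h1 : ⟪x, u⟫ ≤ sf K u := mem_shadow_le_sf hu ⟨x, hx, rfl⟩
  have h2 : ⟪x, v⟫ ≤ sf K v := mem_shadow_le_sf hv ⟨x, hx, rfl⟩
  show ⟪x, u + v⟫ ≤ sf K u + sf K v
  rw [inner_add_right]; exact add_le_add h1 h2

lemma shadow_smul (K : Set (Euc n)) (t : ℝ) (u : Euc n) :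
    shadow K (t • u) = (fun s => t * s) '' shadow K u := by
  rw [shadow, shadow, ← Set.image_comp]
  apply Set.image_congr
  intro x _
  show ⟪x, t • u⟫ = t * ⟪x, u⟫
  exact real_inner_smul_right x u t

lemma Dom_smul {K : Set (Euc n)} {t : ℝ} (ht : 0 ≤ t) {u : Euc n}
    (hu : u ∈ Dom K) : t • u ∈ Dom K := by
  rw [Dom, Set.mem_setOf_eq, shadow_smul]
  obtain ⟨b, hb⟩ := hu
  refine ⟨t * b, ?_⟩
  rintro s ⟨w, hw, rfl⟩
  exact mul_le_mul_of_nonneg_left (hb hw) ht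

lemma sf_smul {K : Set (Euc n)} (hK : K.Nonempty) {t : ℝ} (ht : 0 ≤ t) {u : Euc n}
    (hu : u ∈ Dom K) : sf K (t • u) = t * sf K u := by
  rcases eq_or_lt_of_le ht with h | h
  · subst h
    rw [zero_smul, sf_zero hK, zero_mul]
  · rw [sf, shadow_smul]
    have hlub : IsLUB (shadow K u) (sf K u) := isLUB_csSup (shadow_nonempty hK u) hu
    have : IsLUB ((fun s => t * s) '' shadow K u) (t * sf K u) := by
      constructor
      · rintro s ⟨w, hw, rfl⟩
        exact mul_le_mul_of_nonneg_left (hlub.1 hw) ht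
      · intro b hb
        have : ∀ w ∈ shadow K u, w ≤ b / t := by
          intro w hw
          have := hb (Set.mem_image_of_mem _ hw)
          rw [le_div_iff₀ h]; linarith [this]
        have : sf K u ≤ b / t := hlub.2 this
        calc t * sf K u ≤ t * (b / t) := by
              exact mul_le_mul_of_nonneg_left this ht
        _ = b := by field_simp
    exact this.csSup_eq ((shadow_nonempty hK u).image _)

lemma shadow_neg (K : Set (Euc n)) (u : Euc n) :
    shadow K (-u) = (fun s => -s) '' shadow K u := by
  have : -u = (-1 : ℝ) • u := by module
  rw [this, shadow_smul]
  simp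

/-- key affine transfer: if A = (c + l • ·) '' S with l > 0 -/
lemma affrel {c l : ℝ} (hl : 0 < l) {S A : Set ℝ} (hS : S.Nonempty)
    (hA : A = (fun t => c + l * t) '' S) :
    (BddAbove A ↔ BddAbove S) ∧ (BddAbove S → sSup A = c + l * sSup S) := by
  constructor
  · constructor
    · rintro ⟨b, hb⟩
      refine ⟨(b - c) / l, ?_⟩
      intro t ht
      have : c + l * t ≤ b := hb (by rw [hA]; exact Set.mem_image_of_mem _ ht)
      rw [le_div_iff₀ hl]; linarith
    · rintro ⟨b, hb⟩
      refine ⟨c + l * b, ?_⟩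
      rintro t ht
      rw [hA] at ht
      obtain ⟨w, hw, rfl⟩ := ht
      have h1 := hb hw
      show c + l * w ≤ c + l * b
      nlinarith
  · intro hS'
    have hlub : IsLUB S (sSup S) := isLUB_csSup hS hS'
    have : IsLUB A (c + l * sSup S) := by
      constructor
      · rintro t ht
        rw [hA] at ht
        obtain ⟨w, hw, rfl⟩ := ht
        have h1 := hlub.1 hw
        show c + l * w ≤ c + l * sSup S
        nlinarith
      · intro b hb
        have : ∀ w ∈ S, w ≤ (b - c) / l := by
          intro w hw
          have : c + l * w ≤ b := hb (by rw [hA]; exact Set.mem_image_of_mem _ hw)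
          rw [le_div_iff₀ hl]; linarith
        have := hlub.2 this
        rw [le_div_iff₀ hl] at this
        linarith
    exact this.csSup_eq (by rw [hA]; exact hS.image _)

/-- shadows of a homothetic image, normalized to positive ratio -/
lemma homo_shadow (K : Set (Euc n)) (z : Euc n) (l₀ : ℝ) (hl₀ : l₀ ≠ 0) :
    ∃ l ε : ℝ, 0 < l ∧ (ε = 1 ∨ ε = -1) ∧ ε * l = l₀ ∧
      ∀ u, shadow ((fun y => z + l₀ • y) '' K) u
        = (fun t => ⟪z, u⟫ + l * t) '' shadow K (ε • u) := by
  have base : ∀ u, shadow ((fun y => z + l₀ • y) '' K) u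
      = (fun t => ⟪z, u⟫ + l₀ * t) '' shadow K u := by
    intro u
    rw [shadow, shadow, Set.image_image, ← Set.image_comp]
    apply Set.image_congr
    intro x _
    show ⟪z + l₀ • x, u⟫ = ⟪z, u⟫ + l₀ * ⟪x, u⟫
    rw [inner_add_left, real_inner_smul_left]
  rcases hl₀.lt_or_gt with h | h
  · refine ⟨-l₀, -1, by linarith, Or.inr rfl, by ring, fun u => ?_⟩
    rw [base u]
    have : ((-1 : ℝ) • u) = -u := by module
    rw [this, shadow_neg, Set.image_image]
    apply Set.image_congr
    intro t _
    ring
  · exact ⟨l₀, 1, h, Or.inl rfl, by ring, fun u => by rw [base u, one_smul]⟩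


open Module Submodule

lemma finrank_span_singleton_le (x : Euc n) :
    finrank ℝ (span ℝ ({x} : Set (Euc n))) ≤ 1 := by
  rcases eq_or_ne x 0 with h | h
  · subst h
    rw [Submodule.span_zero_singleton]
    simp
  · rw [finrank_span_singleton h]

lemma finrank_sup_le (A B : Submodule ℝ (Euc n)) :
    finrank ℝ ↥(A ⊔ B) ≤ finrank ℝ A + finrank ℝ B := by
  have := Submodule.finrank_sup_add_finrank_inf_eq A B
  omega

lemma finrank_sp3_le (u v w : Euc n) :
    finrank ℝ (span ℝ ({u, v, w} : Set (Euc n))) ≤ 3 := by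
  have h1 : ({u, v, w} : Set (Euc n)) = {u} ∪ ({v} ∪ {w}) := by
    rw [Set.insert_eq, Set.insert_eq]
  rw [h1, Submodule.span_union, Submodule.span_union]
  have := finrank_sup_le (span ℝ ({v} : Set (Euc n))) (span ℝ ({w} : Set (Euc n)))
  have := finrank_sup_le (span ℝ ({u} : Set (Euc n)))
    (span ℝ ({v} : Set (Euc n)) ⊔ span ℝ ({w} : Set (Euc n)))
  have := finrank_span_singleton_le u
  have := finrank_span_singleton_le v
  have := finrank_span_singleton_le w
  omega

/-- any subspace of rank `≤ k ≤ n` extends to one of rank exactly `k` -/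
lemma ext_finrank (W : Submodule ℝ (Euc n)) (k : ℕ) (h1 : finrank ℝ W ≤ k)
    (h2 : k ≤ n) : ∃ L, W ≤ L ∧ finrank ℝ L = k := by
  induction k with
  | zero =>
    refine ⟨W, le_rfl, ?_⟩; omega
  | succ k ih =>
    rcases Nat.lt_or_ge (finrank ℝ W) (k+1) with hlt | hge
    · obtain ⟨L, hWL, hL⟩ := ih (by omega) (by omega)
      have hne : L ≠ ⊤ := by
        intro h
        rw [h] at hL
        have : finrank ℝ (⊤ : Submodule ℝ (Euc n)) = n := by
          rw [finrank_top]; exact finrank_euclideanSpace_fin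
        omega
      have : ∃ x, x ∉ L := by
        by_contra hc
        push_neg at hc
        exact hne (Submodule.eq_top_iff'.mpr hc)
      obtain ⟨x, hx⟩ := this
      refine ⟨L ⊔ span ℝ {x}, le_trans hWL le_sup_left, ?_⟩
      have hlt2 : L < L ⊔ span ℝ {x} := by
        refine lt_of_le_of_ne le_sup_left ?_
        intro h
        apply hx
        rw [h]
        exact Submodule.mem_sup_right (Submodule.mem_span_singleton_self x)
      have hgt := Submodule.finrank_lt_finrank_of_lt hlt2
      have hle := finrank_sup_le L (span ℝ ({x} : Set (Euc n)))
      have := finrank_span_singleton_le x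
      omega
    · exact ⟨W, le_rfl, by omega⟩

/-- shadow of the projected set equals shadow of the set, in directions of L -/
lemma shadow_planeProj (K : Set (Euc n)) (p : Euc n) (L : Submodule ℝ (Euc n))
    {x : Euc n} (hx : x ∈ L) :
    shadow (planeProj p L '' K) x = shadow K x := by
  rw [shadow, shadow, Set.image_image]
  apply Set.image_congr
  intro y _
  show ⟪p + (orthogonalProjection L (y - p) : Euc n), x⟫ = ⟪y, x⟫
  have h1 : ⟪(y - p) - (orthogonalProjection L (y - p) : Euc n), x⟫ = 0 :=
    starProjection_inner_eq_zero (y - p) x hx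
  have h2 : ⟪p + (orthogonalProjection L (y - p) : Euc n), x⟫
      = ⟪y, x⟫ - ⟪(y - p) - (orthogonalProjection L (y - p) : Euc n), x⟫ := by
    rw [← inner_sub_left]
    congr 1
    abel
  rw [h2, h1, sub_zero]


lemma windows_of_rhs {m r : ℕ} (hrm : r + 3 ≤ m) (hmn : m + 1 ≤ n)
    (S : Submodule ℝ (Euc n)) (hS : Module.finrank ℝ S = r)
    (K₁ K₂ : Set (Euc n))
    (hyp : ∀ (p : Euc n) (L : Submodule ℝ (Euc n)),
       Module.finrank ℝ L = m → S ≤ L →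
       Homothetic (planeProj p L '' K₁) (planeProj p L '' K₂)) :
    ∀ u v w : Euc n, ∃ (z : Euc n) (l ε : ℝ), 0 < l ∧ (ε = 1 ∨ ε = -1) ∧
      ∀ x ∈ sp3 u v w, shadow K₁ x = (fun t => ⟪z, x⟫ + l * t) '' shadow K₂ (ε • x) := by
  intro u v w
  have h3 : Module.finrank ℝ ↥(sp3 u v w) ≤ 3 := finrank_sp3_le u v w
  have hsup := finrank_sup_le (sp3 u v w) S
  rw [hS] at hsup
  obtain ⟨L, hle, hLrank⟩ := ext_finrank (sp3 u v w ⊔ S) m (by omega) (by omega)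
  obtain ⟨z₀, l₀, hl₀, heq⟩ := hyp 0 L hLrank (le_trans le_sup_right hle)
  obtain ⟨l, ε, hl, hε, hεl, hsh⟩ := homo_shadow (planeProj 0 L '' K₂) z₀ l₀ hl₀
  refine ⟨z₀, l, ε, hl, hε, fun x hx => ?_⟩
  have hxL : x ∈ L := hle (le_sup_left (α := Submodule ℝ (Euc n)) hx)
  have hεx : ε • x ∈ L := L.smul_mem ε hxL
  calc shadow K₁ x = shadow (planeProj 0 L '' K₁) x := (shadow_planeProj _ _ _ hxL).symm
  _ = shadow ((fun y => z₀ + l₀ • y) '' (planeProj 0 L '' K₂)) x := by rw [heq]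
  _ = (fun t => ⟪z₀, x⟫ + l * t) '' shadow (planeProj 0 L '' K₂) (ε • x) := hsh x
  _ = (fun t => ⟪z₀, x⟫ + l * t) '' shadow K₂ (ε • x) := by
        rw [shadow_planeProj _ _ _ hεx]

lemma wrel_of_rhs {m r : ℕ} (hrm : r + 3 ≤ m) (hmn : m + 1 ≤ n)
    (S : Submodule ℝ (Euc n)) (hS : Module.finrank ℝ S = r)
    (K₁ K₂ : Set (Euc n)) (hne₂ : K₂.Nonempty)
    (hyp : ∀ (p : Euc n) (L : Submodule ℝ (Euc n)),
       Module.finrank ℝ L = m → S ≤ L →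
       Homothetic (planeProj p L '' K₁) (planeProj p L '' K₂)) :
    ∀ u v w : Euc n, ∃ (z : Euc n) (l ε : ℝ), 0 < l ∧ (ε = 1 ∨ ε = -1) ∧
      ∀ x ∈ sp3 u v w, (x ∈ Dom K₁ ↔ ε • x ∈ Dom K₂) ∧
        (x ∈ Dom K₁ → sf K₁ x = ⟪z, x⟫ + l * sf K₂ (ε • x)) := by
  intro u v w
  obtain ⟨z, l, ε, hl, hε, hsh⟩ := windows_of_rhs hrm hmn S hS K₁ K₂ hyp u v w
  refine ⟨z, l, ε, hl, hε, fun x hx => ?_⟩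
  obtain ⟨hbdd, hsup⟩ := affrel hl (shadow_nonempty hne₂ (ε • x)) (hsh x hx)
  exact ⟨hbdd, fun hD => hsup (hbdd.mp hD)⟩

lemma eq_of_shadow_data (K T : Set (Euc n)) (hKne : K.Nonempty) (hTne : T.Nonempty)
    (hKc : IsClosed K) (hTc : IsClosed T) (hKv : Convex ℝ K) (hTv : Convex ℝ T)
    (h : ∀ u : Euc n, (BddAbove (shadow K u) ↔ BddAbove (shadow T u)) ∧
         (BddAbove (shadow K u) → sSup (shadow K u) = sSup (shadow T u))) : K = T := by
  have main : ∀ (A B : Set (Euc n)), A.Nonempty → B.Nonempty → IsClosed B → Convex ℝ B →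
      (∀ u : Euc n, (BddAbove (shadow A u) ↔ BddAbove (shadow B u)) ∧
        (BddAbove (shadow A u) → sSup (shadow A u) = sSup (shadow B u))) → A ⊆ B := by
    intro A B hA hB hBc hBv hrel x hxA
    by_contra hxB
    obtain ⟨f, c, hfb, hfx⟩ := geometric_hahn_banach_closed_point hBv hBc hxB
    set w := (InnerProductSpace.toDual ℝ (Euc n)).symm f with hw
    have hwf : ∀ y : Euc n, ⟪y, w⟫ = f y := by
      intro y
      rw [real_inner_comm]
      exact InnerProductSpace.toDual_symm_apply
    have hBdd : BddAbove (shadow B w) := by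
      refine ⟨c, ?_⟩
      rintro t ⟨y, hy, rfl⟩
      show ⟪y, w⟫ ≤ c
      rw [hwf]
      exact le_of_lt (hfb y hy)
    have hBsup : sSup (shadow B w) ≤ c := by
      apply csSup_le (shadow_nonempty hB w)
      rintro t ⟨y, hy, rfl⟩
      show ⟪y, w⟫ ≤ c
      rw [hwf]; exact le_of_lt (hfb y hy)
    have hABdd : BddAbove (shadow A w) := (hrel w).1.mpr hBdd
    have hxle : ⟪x, w⟫ ≤ sSup (shadow A w) :=
      le_csSup hABdd ⟨x, hxA, rfl⟩
    rw [(hrel w).2 hABdd] at hxle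
    have : ⟪x, w⟫ ≤ c := le_trans hxle hBsup
    rw [hwf] at this
    linarith
  apply Set.Subset.antisymm
  · exact main K T hKne hTne hTc hTv h
  · refine main T K hTne hKne hKc hKv ?_
    intro u
    refine ⟨((h u).1).symm, fun hT => ?_⟩
    exact ((h u).2 ((h u).1.mpr hT)).symm

lemma homothetic_of_glob (K₁ K₂ : Set (Euc n)) (hne₁ : K₁.Nonempty) (hne₂ : K₂.Nonempty)
    (hcl₁ : IsClosed K₁) (hcl₂ : IsClosed K₂) (hcv₁ : Convex ℝ K₁) (hcv₂ : Convex ℝ K₂)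
    (z : Euc n) (l ε : ℝ) (hl : 0 < l) (hε : ε = 1 ∨ ε = -1)
    (hglob : ∀ x : Euc n, (x ∈ Dom K₁ ↔ ε • x ∈ Dom K₂) ∧
      (x ∈ Dom K₁ → sf K₁ x = ⟪z, x⟫ + l * sf K₂ (ε • x))) :
    Homothetic K₁ K₂ := by
  set l₀ : ℝ := ε * l with hl₀def
  have hl₀ : l₀ ≠ 0 := by
    rcases hε with h | h <;> rw [hl₀def, h] <;> simp <;> linarith
  refine ⟨z, l₀, hl₀, ?_⟩
  set T := (fun y => z + l₀ • y) '' K₂ with hT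
  have hTne : T.Nonempty := hne₂.image _
  have hTc : IsClosed T := by
    have h1 : T = (Homeomorph.addLeft z) ''
        ((Homeomorph.smulOfNeZero l₀ hl₀) '' K₂) := by
      rw [hT, Set.image_image]
      rfl
    rw [h1, Homeomorph.isClosed_image, Homeomorph.isClosed_image]
    exact hcl₂
  have hTv : Convex ℝ T := by
    have h1 : T = (fun y => z + y) '' (l₀ • K₂) := by
      rw [hT, ← Set.image_smul, Set.image_image]
    rw [h1]
    exact (hcv₂.smul l₀).translate z
  -- shadows of T
  obtain ⟨l', ε', hl', hε', hε'l, hsh⟩ := homo_shadow K₂ z l₀ hl₀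
  have h₀ : ε' * l' = ε * l := hε'l
  have hll : l' = l ∧ ε' = ε := by
    rcases hε with h | h <;> rcases hε' with h' | h' <;> subst h <;> subst h'
    · exact ⟨by nlinarith, rfl⟩
    · exact absurd h₀ (by nlinarith)
    · exact absurd h₀ (by nlinarith)
    · exact ⟨by nlinarith, rfl⟩
  obtain ⟨hleq, hεeq⟩ := hll
  apply eq_of_shadow_data K₁ T hne₁ hTne hcl₁ hTc hcv₁ hTv
  intro u
  obtain ⟨hbdd, hsup⟩ := affrel (by rw [hleq]; exact hl)
    (shadow_nonempty hne₂ (ε' • u)) (hsh u)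
  obtain ⟨hiff, himp⟩ := hglob u
  constructor
  · rw [hT, hbdd, hεeq]
    exact hiff
  · intro hKb
    have hD1 : u ∈ Dom K₁ := hKb
    have h2 : BddAbove (shadow K₂ (ε' • u)) := by rw [hεeq]; exact hiff.mp hD1
    have h3 := hsup h2
    rw [hT, h3, hleq, hεeq]
    exact himp hD1

lemma forward_dir (K₁ K₂ : Set (Euc n)) (h : Homothetic K₁ K₂)
    (p : Euc n) (L : Submodule ℝ (Euc n)) :
    Homothetic (planeProj p L '' K₁) (planeProj p L '' K₂) := by
  obtain ⟨z, l₀, hl₀, heq⟩ := h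
  set c : Euc n := z + l₀ • p - p with hc
  refine ⟨p + (orthogonalProjection L c : Euc n) - l₀ • p, l₀, hl₀, ?_⟩
  rw [heq, Set.image_image, Set.image_image]
  apply Set.image_congr
  intro y _
  show planeProj p L (z + l₀ • y) = p + (orthogonalProjection L c : Euc n) - l₀ • p
      + l₀ • planeProj p L y
  rw [planeProj, planeProj]
  have harg : z + l₀ • y - p = c + l₀ • (y - p) := by rw [hc]; module
  rw [harg, map_add, map_smul]
  push_cast
  module


lemma asym_core (K₁ K₂ : Set (Euc n)) (hne₁ : K₁.Nonempty) (hne₂ : K₂.Nonempty)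
    (hwin : ∀ u v w : Euc n, ∃ (z : Euc n) (l ε : ℝ), 0 < l ∧ (ε = 1 ∨ ε = -1) ∧
      ∀ x ∈ sp3 u v w, (x ∈ Dom K₁ ↔ ε • x ∈ Dom K₂) ∧
        (x ∈ Dom K₁ → sf K₁ x = ⟪z, x⟫ + l * sf K₂ (ε • x)))
    (u₀ : Euc n) (h1 : u₀ ∈ Dom K₁) (h2 : u₀ ∈ Dom K₂) (h3 : -u₀ ∉ Dom K₂) :
    ∃ (z : Euc n) (l : ℝ), 0 < l ∧ ∀ x : Euc n, (x ∈ Dom K₁ ↔ x ∈ Dom K₂) ∧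
      (x ∈ Dom K₁ → sf K₁ x = ⟪z, x⟫ + l * sf K₂ x) := by
  classical
  have force : ∀ u v w : Euc n, u₀ ∈ sp3 u v w →
      ∃ (z : Euc n) (l : ℝ), 0 < l ∧
      ∀ x ∈ sp3 u v w, (x ∈ Dom K₁ ↔ x ∈ Dom K₂) ∧
        (x ∈ Dom K₁ → sf K₁ x = ⟪z, x⟫ + l * sf K₂ x) := by
    intro u v w hu₀
    obtain ⟨z, l, ε, hl, hε, hrel⟩ := hwin u v w
    rcases hε with hε | hε
    · subst hε
      refine ⟨z, l, hl, fun x hx => ?_⟩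
      have := hrel x hx
      rwa [one_smul] at this
    · exfalso
      subst hε
      have := (hrel u₀ hu₀).1
      rw [show (-1 : ℝ) • u₀ = -u₀ by module] at this
      exact h3 (this.mp h1)
  have domeq : ∀ x : Euc n, x ∈ Dom K₁ ↔ x ∈ Dom K₂ := by
    intro x
    obtain ⟨z, l, hl, hrel⟩ := force x x u₀ (mem_sp3₃ _ _ _)
    exact (hrel x (mem_sp3₁ _ _ _)).1
  set A : Set (Euc n) := {a | a ∈ Dom K₂ ∧ -a ∉ Dom K₂} with hA
  have hADom : A ⊆ Dom K₂ := fun a ha => ha.1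
  have hAabs : ∀ {a d : Euc n}, a ∈ A → d ∈ Dom K₂ → a + d ∈ A := by
    intro a d ha hd
    refine ⟨Dom_add hne₂ ha.1 hd, fun hc => ?_⟩
    apply ha.2
    have he : -a = -(a + d) + d := by module
    rw [he]
    exact Dom_add hne₂ hc hd
  have force' : ∀ x y a : Euc n, a ∈ A →
      ∃ (z : Euc n) (l : ℝ), 0 < l ∧
      ∀ p ∈ sp3 x y a, (p ∈ Dom K₁ ↔ p ∈ Dom K₂) ∧
        (p ∈ Dom K₁ → sf K₁ p = ⟪z, p⟫ + l * sf K₂ p) := by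
    intro x y a ha
    obtain ⟨z, l, ε, hl, hε, hrel⟩ := hwin x y a
    rcases hε with hε | hε
    · subst hε
      exact ⟨z, l, hl, fun p hp => by have := hrel p hp; rwa [one_smul] at this⟩
    · exfalso
      subst hε
      have := (hrel a (mem_sp3₃ _ _ _)).1
      rw [show (-1 : ℝ) • a = -a by module] at this
      exact ha.2 (this.mp ((domeq a).mpr ha.1))
  have hmod := modulus_lemma (sf K₁) (sf K₂) (Dom K₂)
    (fun hx hy => Dom_add hne₂ hx hy) A ⟨u₀, h2, h3⟩ hADom (fun ha hd => hAabs ha hd)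
    (fun x hx y hy => by
      have := sf_subadd hne₂ hx hy
      simp only [dlt]; linarith)
    (fun x y a ha => by
      obtain ⟨z, l, hl, hrel⟩ := force' x y a ha
      refine ⟨l, hl, fun p hp q hq hps hqs => ?_⟩
      have hpq : p + q ∈ Dom K₂ := Dom_add hne₂ hp hq
      have e1 := (hrel p hps).2 ((domeq p).mpr hp)
      have e2 := (hrel q hqs).2 ((domeq q).mpr hq)
      have e3 := (hrel (p + q) ((sp3 x y a).add_mem hps hqs)).2 ((domeq _).mpr hpq)
      simp only [dlt]
      rw [e1, e2, e3, inner_add_right]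
      ring)
  obtain ⟨l, hl, hdlt⟩ := hmod
  have hcone := cone_ext (Dom K₂) (zero_mem_Dom hne₂) (fun hx hy => Dom_add hne₂ hx hy)
    (fun {t} ht {x} hx => Dom_smul ht hx)
    (fun x => sf K₁ x - l * sf K₂ x)
    (fun x hx y hy => by
      have h := hdlt x hx y hy
      simp only [dlt] at h
      show sf K₁ (x + y) - l * sf K₂ (x + y)
        = (sf K₁ x - l * sf K₂ x) + (sf K₁ y - l * sf K₂ y)
      nlinarith [h])
    (fun t ht x hx => by
      show sf K₁ (t • x) - l * sf K₂ (t • x) = t * (sf K₁ x - l * sf K₂ x)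
      rw [sf_smul hne₁ ht ((domeq x).mpr hx), sf_smul hne₂ ht hx]
      ring)
  obtain ⟨z, hz⟩ := hcone
  refine ⟨z, l, hl, fun x => ⟨domeq x, fun hx1 => ?_⟩⟩
  have hx2 := (domeq x).mp hx1
  have h : sf K₁ x - l * sf K₂ x = ⟪z, x⟫ := hz x hx2
  show sf K₁ x = ⟪z, x⟫ + l * sf K₂ x
  linarith [h]

lemma backward_core (K₁ K₂ : Set (Euc n)) (hne₁ : K₁.Nonempty) (hne₂ : K₂.Nonempty)
    (hwin : ∀ u v w : Euc n, ∃ (z : Euc n) (l ε : ℝ), 0 < l ∧ (ε = 1 ∨ ε = -1) ∧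
      ∀ x ∈ sp3 u v w, (x ∈ Dom K₁ ↔ ε • x ∈ Dom K₂) ∧
        (x ∈ Dom K₁ → sf K₁ x = ⟪z, x⟫ + l * sf K₂ (ε • x))) :
    ∃ (z : Euc n) (l ε : ℝ), 0 < l ∧ (ε = 1 ∨ ε = -1) ∧
      ∀ x : Euc n, (x ∈ Dom K₁ ↔ ε • x ∈ Dom K₂) ∧
        (x ∈ Dom K₁ → sf K₁ x = ⟪z, x⟫ + l * sf K₂ (ε • x)) := by
  classical
  by_cases hsym : ∀ u ∈ Dom K₂, -u ∈ Dom K₂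
  · -- symmetric case
    have domeq : ∀ x : Euc n, x ∈ Dom K₁ ↔ x ∈ Dom K₂ := by
      intro x
      obtain ⟨z, l, ε, hl, hε, hrel⟩ := hwin x x x
      have hi := (hrel x (mem_sp3₁ _ _ _)).1
      rcases hε with h | h <;> subst h
      · rwa [one_smul] at hi
      · rw [show (-1 : ℝ) • x = -x by module] at hi
        constructor
        · intro hx
          have h1 := hsym _ (hi.mp hx)
          rwa [neg_neg] at h1
        · intro hx
          exact hi.mpr (hsym _ hx)
    set Dsub : Submodule ℝ (Euc n) :=
      { carrier := Dom K₂
        add_mem' := fun hx hy => Dom_add hne₂ hx hy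
        zero_mem' := zero_mem_Dom hne₂
        smul_mem' := by
          intro t x hx
          rcases le_or_gt 0 t with h | h
          · exact Dom_smul h hx
          · have hx1 : -x ∈ Dom K₂ := hsym x hx
            have hx2 : (-t) • (-x) ∈ Dom K₂ := Dom_smul (by linarith) hx1
            rwa [show (-t) • (-x) = t • x by module] at hx2 } with hDsub
    have wr : ∀ (W : Submodule ℝ (Euc n)) (z : Euc n) (l ε : ℝ), (ε = 1 ∨ ε = -1) →
        (∀ x ∈ W, (x ∈ Dom K₁ ↔ ε • x ∈ Dom K₂) ∧
          (x ∈ Dom K₁ → sf K₁ x = ⟪z, x⟫ + l * sf K₂ (ε • x))) →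
        ∀ x ∈ W, x ∈ Dom K₂ →
          sf K₁ x + sf K₁ (-x) = l * (sf K₂ x + sf K₂ (-x)) := by
      intro W z l ε hε hrel x hxW hxD
      have hxD1 : x ∈ Dom K₁ := (domeq x).mpr hxD
      have hnxD : -x ∈ Dom K₂ := hsym x hxD
      have hnxD1 : -x ∈ Dom K₁ := (domeq _).mpr hnxD
      have e1 := (hrel x hxW).2 hxD1
      have e2 := (hrel (-x) (W.neg_mem hxW)).2 hnxD1
      rcases hε with h | h <;> subst h
      · rw [one_smul] at e1
        rw [one_smul] at e2
        rw [e1, e2, inner_neg_right]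
        ring
      · rw [show (-1 : ℝ) • x = -x by module] at e1
        rw [show (-1 : ℝ) • -x = x by module] at e2
        rw [e1, e2, inner_neg_right]
        ring
    by_cases hflat : ∀ x ∈ Dom K₂, sf K₂ x + sf K₂ (-x) = 0
    · -- all shadows of K₂ are degenerate
      have gadd : ∀ x ∈ Dom K₂, ∀ y ∈ Dom K₂,
          sf K₂ (x + y) = sf K₂ x + sf K₂ y := by
        intro x hx y hy
        have hxy : x + y ∈ Dom K₂ := Dom_add hne₂ hx hy
        have hny : -y ∈ Dom K₂ := hsym y hy
        have hle : sf K₂ ((x + y) + -y) ≤ sf K₂ (x + y) + sf K₂ (-y) :=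
          sf_subadd hne₂ hxy hny
        rw [show x + y + -y = x by abel] at hle
        have h2 := hflat y hy
        have h3 := sf_subadd hne₂ hx hy
        linarith
      have WFzero : ∀ x ∈ Dom K₂, sf K₁ x + sf K₁ (-x) = 0 := by
        intro x hx
        obtain ⟨z, l, ε, hl, hε, hrel⟩ := hwin x x x
        have h := wr (sp3 x x x) z l ε hε hrel x (mem_sp3₁ _ _ _) hx
        rw [hflat x hx] at h
        simpa using h
      have fadd : ∀ x ∈ Dom K₂, ∀ y ∈ Dom K₂,
          sf K₁ (x + y) = sf K₁ x + sf K₁ y := by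
        intro x hx y hy
        have hxy : x + y ∈ Dom K₂ := Dom_add hne₂ hx hy
        have hny : -y ∈ Dom K₂ := hsym y hy
        have hle : sf K₁ ((x + y) + -y) ≤ sf K₁ (x + y) + sf K₁ (-y) :=
          sf_subadd hne₁ ((domeq _).mpr hxy) ((domeq _).mpr hny)
        rw [show x + y + -y = x by abel] at hle
        have h2 := WFzero y hy
        have h3 := sf_subadd hne₁ ((domeq _).mpr hx) ((domeq _).mpr hy)
        linarith
      have hcone := cone_ext (Dom K₂) (zero_mem_Dom hne₂)
        (fun hx hy => Dom_add hne₂ hx hy) (fun {t} ht {x} hx => Dom_smul ht hx)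
        (fun x => sf K₁ x - sf K₂ x)
        (fun x hx y hy => by
          show sf K₁ (x + y) - sf K₂ (x + y)
            = (sf K₁ x - sf K₂ x) + (sf K₁ y - sf K₂ y)
          rw [gadd x hx y hy, fadd x hx y hy]; ring)
        (fun t ht x hx => by
          show sf K₁ (t • x) - sf K₂ (t • x) = t * (sf K₁ x - sf K₂ x)
          rw [sf_smul hne₁ ht ((domeq x).mpr hx), sf_smul hne₂ ht hx]; ring)
      obtain ⟨z, hz⟩ := hcone
      refine ⟨z, 1, 1, one_pos, Or.inl rfl, fun x => ?_⟩
      rw [one_smul]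
      refine ⟨domeq x, fun hx1 => ?_⟩
      have h : sf K₁ x - sf K₂ x = ⟪z, x⟫ := hz x ((domeq x).mp hx1)
      show sf K₁ x = ⟪z, x⟫ + 1 * sf K₂ x
      linarith
    · -- bodies have positive width somewhere
      push_neg at hflat
      obtain ⟨x₀, hx₀D, hΩ₀⟩ := hflat
      have Ωnn : ∀ x ∈ Dom K₂, 0 ≤ sf K₂ x + sf K₂ (-x) := by
        intro x hx
        have h := sf_subadd hne₂ hx (hsym x hx)
        rw [show x + -x = (0 : Euc n) by abel, sf_zero hne₂] at h
        linarith
      have hΩ₀pos : 0 < sf K₂ x₀ + sf K₂ (-x₀) :=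
        lt_of_le_of_ne (Ωnn x₀ hx₀D) (Ne.symm hΩ₀)
      obtain ⟨z₀, l₀, ε₀, hl₀, hε₀, hrel₀⟩ := hwin x₀ x₀ x₀
      have hWF₀ : sf K₁ x₀ + sf K₁ (-x₀) = l₀ * (sf K₂ x₀ + sf K₂ (-x₀)) :=
        wr _ z₀ l₀ ε₀ hε₀ hrel₀ x₀ (mem_sp3₁ _ _ _) hx₀D
      have lamuniv : ∀ x ∈ Dom K₂,
          sf K₁ x + sf K₁ (-x) = l₀ * (sf K₂ x + sf K₂ (-x)) := by
        intro x hx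
        obtain ⟨z, l, ε, hl, hε, hrel⟩ := hwin x x₀ x₀
        have e1 := wr _ z l ε hε hrel x (mem_sp3₁ _ _ _) hx
        have e2 := wr _ z l ε hε hrel x₀ (mem_sp3₂ _ _ _) hx₀D
        have hll : l = l₀ := by
          have h := hWF₀
          rw [e2] at h
          have := hΩ₀pos
          nlinarith
        rw [← hll]
        exact e1
      -- coercion of spans
      have cmem : ∀ (u v w p : ↥Dsub), p ∈ sp3 u v w →
          (p : Euc n) ∈ sp3 (u : Euc n) (v : Euc n) (w : Euc n) := by
        intro u v w p hp
        have hmap : (p : Euc n) ∈ Submodule.map Dsub.subtype (sp3 u v w) :=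
          Submodule.mem_map_of_mem hp
        rw [sp3, Submodule.map_span] at hmap
        have himg : Dsub.subtype '' {u, v, w}
            = {(u : Euc n), (v : Euc n), (w : Euc n)} := by
          simp [Set.image_insert_eq]
        rwa [himg] at hmap
      -- sign dichotomy on the subtype
      have hside : ∀ u v w : ↥Dsub,
          (∀ p ∈ sp3 u v w, ∀ q ∈ sp3 u v w,
            dlt (fun p : ↥Dsub => sf K₁ (p : Euc n) - l₀ * sf K₂ (p : Euc n)) p q = 0) ∨
          (∀ p ∈ sp3 u v w, ∀ q ∈ sp3 u v w,
            dlt (fun p : ↥Dsub => sf K₁ (p : Euc n) - l₀ * sf K₂ (-(p : Euc n))) p q = 0) := by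
        intro u v w
        obtain ⟨z, l, ε, hl, hε, hrel⟩ := hwin (u : Euc n) (v : Euc n) (w : Euc n)
        by_cases hcase : l = l₀
        · subst hcase
          rcases hε with h | h <;> subst h
          · left
            intro p hp q hq
            have hps := cmem u v w p hp
            have hqs := cmem u v w q hq
            have hpqs : ((p + q : ↥Dsub) : Euc n) ∈ sp3 (u : Euc n) (v : Euc n) (w : Euc n) := by
              rw [Submodule.coe_add]
              exact (sp3 _ _ _).add_mem hps hqs
            have e1 := (hrel _ hps).2 ((domeq _).mpr p.2)
            have e2 := (hrel _ hqs).2 ((domeq _).mpr q.2)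
            have e3 := (hrel _ hpqs).2 ((domeq _).mpr (p + q).2)
            rw [one_smul] at e1 e2 e3
            simp only [dlt, Submodule.coe_add]
            rw [Submodule.coe_add] at e3
            rw [e1, e2, e3, inner_add_right]
            ring
          · right
            intro p hp q hq
            have hps := cmem u v w p hp
            have hqs := cmem u v w q hq
            have hpqs : ((p + q : ↥Dsub) : Euc n) ∈ sp3 (u : Euc n) (v : Euc n) (w : Euc n) := by
              rw [Submodule.coe_add]
              exact (sp3 _ _ _).add_mem hps hqs
            have e1 := (hrel _ hps).2 ((domeq _).mpr p.2)
            have e2 := (hrel _ hqs).2 ((domeq _).mpr q.2)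
            have e3 := (hrel _ hpqs).2 ((domeq _).mpr (p + q).2)
            rw [show (-1 : ℝ) • ((p : Euc n)) = -(p : Euc n) by module] at e1
            rw [show (-1 : ℝ) • ((q : Euc n)) = -(q : Euc n) by module] at e2
            rw [show (-1 : ℝ) • (((p + q : ↥Dsub)) : Euc n)
              = -(((p + q : ↥Dsub)) : Euc n) by module] at e3
            simp only [dlt, Submodule.coe_add]
            rw [Submodule.coe_add] at e3
            rw [show -((p : Euc n) + (q : Euc n)) = -(p : Euc n) + -(q : Euc n) by module] at e3
            rw [e1, e2, e3, inner_add_right]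
            have : -(p : Euc n) + -(q : Euc n) = -((p : Euc n) + (q : Euc n)) := by module
            rw [this, show -((p : Euc n) + (q : Euc n))
              = -(p : Euc n) + -(q : Euc n) by module]
            ring
        · -- width vanishes on the whole window
          have hΩW : ∀ x ∈ sp3 (u : Euc n) (v : Euc n) (w : Euc n), x ∈ Dom K₂ →
              sf K₂ x + sf K₂ (-x) = 0 := by
            intro x hxW hxD
            have e1 := wr _ z l ε hε hrel x hxW hxD
            have e2 := lamuniv x hxD
            have hΩx := Ωnn x hxD
            by_contra hne
            have : l = l₀ := by
              have hpos : 0 < sf K₂ x + sf K₂ (-x) := lt_of_le_of_ne hΩx (Ne.symm hne)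
              nlinarith
            exact hcase this
          -- all shadows degenerate on this window; both sides additive
          have gaddW : ∀ x ∈ sp3 (u : Euc n) (v : Euc n) (w : Euc n), x ∈ Dom K₂ →
              ∀ y ∈ sp3 (u : Euc n) (v : Euc n) (w : Euc n), y ∈ Dom K₂ →
              sf K₂ (x + y) = sf K₂ x + sf K₂ y := by
            intro x hxW hxD y hyW hyD
            have hxy : x + y ∈ Dom K₂ := Dom_add hne₂ hxD hyD
            have hny : -y ∈ Dom K₂ := hsym y hyD
            have hle : sf K₂ ((x + y) + -y) ≤ sf K₂ (x + y) + sf K₂ (-y) :=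
              sf_subadd hne₂ hxy hny
            rw [show x + y + -y = x by abel] at hle
            have h2 := hΩW y hyW hyD
            have h3 := sf_subadd hne₂ hxD hyD
            linarith
          have faddW : ∀ x ∈ sp3 (u : Euc n) (v : Euc n) (w : Euc n), x ∈ Dom K₂ →
              ∀ y ∈ sp3 (u : Euc n) (v : Euc n) (w : Euc n), y ∈ Dom K₂ →
              sf K₁ (x + y) = sf K₁ x + sf K₁ y := by
            intro x hxW hxD y hyW hyD
            have hxy : x + y ∈ Dom K₂ := Dom_add hne₂ hxD hyD
            have hny : -y ∈ Dom K₂ := hsym y hyD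
            have hle : sf K₁ ((x + y) + -y) ≤ sf K₁ (x + y) + sf K₁ (-y) :=
              sf_subadd hne₁ ((domeq _).mpr hxy) ((domeq _).mpr hny)
            rw [show x + y + -y = x by abel] at hle
            have hWFy : sf K₁ y + sf K₁ (-y) = 0 := by
              have := wr _ z l ε hε hrel y hyW hyD
              rw [hΩW y hyW hyD] at this
              simpa using this
            have h3 := sf_subadd hne₁ ((domeq _).mpr hxD) ((domeq _).mpr hyD)
            linarith
          left
          intro p hp q hq
          have hps := cmem u v w p hp
          have hqs := cmem u v w q hq
          simp only [dlt, Submodule.coe_add]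
          rw [gaddW _ hps p.2 _ hqs q.2, faddW _ hps p.2 _ hqs q.2]
          ring
      -- use the sign dichotomy
      have hsign := sign_lemma (V := ↥Dsub)
        (fun p => sf K₁ (p : Euc n) - l₀ * sf K₂ (p : Euc n))
        (fun p => sf K₁ (p : Euc n) - l₀ * sf K₂ (-(p : Euc n))) hside
      rcases hsign with hadd | hadd
      · -- orientation preserving
        have hcone := cone_ext (Dom K₂) (zero_mem_Dom hne₂)
          (fun hx hy => Dom_add hne₂ hx hy) (fun {t} ht {x} hx => Dom_smul ht hx)
          (fun x => sf K₁ x - l₀ * sf K₂ x)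
          (fun x hx y hy => by
            have h := hadd ⟨x, hx⟩ ⟨y, hy⟩
            simp only [dlt] at h
            show sf K₁ (x + y) - l₀ * sf K₂ (x + y)
              = (sf K₁ x - l₀ * sf K₂ x) + (sf K₁ y - l₀ * sf K₂ y)
            have hc : ((⟨x, hx⟩ + ⟨y, hy⟩ : ↥Dsub) : Euc n) = x + y := rfl
            rw [hc] at h
            linarith)
          (fun t ht x hx => by
            show sf K₁ (t • x) - l₀ * sf K₂ (t • x) = t * (sf K₁ x - l₀ * sf K₂ x)
            rw [sf_smul hne₁ ht ((domeq x).mpr hx), sf_smul hne₂ ht hx]; ring)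
        obtain ⟨z, hz⟩ := hcone
        refine ⟨z, l₀, 1, hl₀, Or.inl rfl, fun x => ?_⟩
        rw [one_smul]
        refine ⟨domeq x, fun hx1 => ?_⟩
        have h : sf K₁ x - l₀ * sf K₂ x = ⟪z, x⟫ := hz x ((domeq x).mp hx1)
        show sf K₁ x = ⟪z, x⟫ + l₀ * sf K₂ x
        linarith
      · -- orientation reversing
        have hcone := cone_ext (Dom K₂) (zero_mem_Dom hne₂)
          (fun hx hy => Dom_add hne₂ hx hy) (fun {t} ht {x} hx => Dom_smul ht hx)
          (fun x => sf K₁ x - l₀ * sf K₂ (-x))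
          (fun x hx y hy => by
            have h := hadd ⟨x, hx⟩ ⟨y, hy⟩
            simp only [dlt] at h
            show sf K₁ (x + y) - l₀ * sf K₂ (-(x + y))
              = (sf K₁ x - l₀ * sf K₂ (-x)) + (sf K₁ y - l₀ * sf K₂ (-y))
            have hc : ((⟨x, hx⟩ + ⟨y, hy⟩ : ↥Dsub) : Euc n) = x + y := rfl
            rw [hc] at h
            linarith)
          (fun t ht x hx => by
            show sf K₁ (t • x) - l₀ * sf K₂ (-(t • x)) = t * (sf K₁ x - l₀ * sf K₂ (-x))
            rw [show -(t • x) = t • (-x) by module,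
              sf_smul hne₁ ht ((domeq x).mpr hx), sf_smul hne₂ ht (hsym x hx)]
            ring)
        obtain ⟨z, hz⟩ := hcone
        refine ⟨z, l₀, -1, hl₀, Or.inr rfl, fun x => ?_⟩
        rw [show (-1 : ℝ) • x = -x by module]
        constructor
        · constructor
          · intro hx
            exact hsym x ((domeq x).mp hx)
          · intro hx
            have := hsym _ hx
            rw [neg_neg] at this
            exact (domeq x).mpr this
        · intro hx1
          have h : sf K₁ x - l₀ * sf K₂ (-x) = ⟪z, x⟫ := hz x ((domeq x).mp hx1)
          show sf K₁ x = ⟪z, x⟫ + l₀ * sf K₂ (-x)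
          linarith
  · -- asymmetric case
    push_neg at hsym
    obtain ⟨u₀, hu₀, hnu₀⟩ := hsym
    obtain ⟨z, l, ε, hl, hε, hrel⟩ := hwin u₀ u₀ u₀
    rcases hε with hε | hε
    · subst hε
      have h1 : u₀ ∈ Dom K₁ := by
        have hi := (hrel u₀ (mem_sp3₁ _ _ _)).1
        rw [one_smul] at hi
        exact hi.mpr hu₀
      obtain ⟨z', l', hl', hG⟩ := asym_core K₁ K₂ hne₁ hne₂ hwin u₀ h1 hu₀ hnu₀
      refine ⟨z', l', 1, hl', Or.inl rfl, fun x => ?_⟩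
      rw [one_smul]
      exact hG x
    · subst hε
      have h1 : -u₀ ∈ Dom K₁ := by
        have hi := (hrel (-u₀) ((sp3 u₀ u₀ u₀).neg_mem (mem_sp3₁ _ _ _))).1
        rw [show (-1 : ℝ) • -u₀ = u₀ by module] at hi
        exact hi.mpr hu₀
      set K₂' : Set (Euc n) := (fun y => -y) '' K₂ with hK₂'
      have hshadow' : ∀ x, shadow K₂' x = shadow K₂ (-x) := by
        intro x
        rw [hK₂', shadow, shadow, Set.image_image]
        apply Set.image_congr
        intro y _
        show ⟪-y, x⟫ = ⟪y, -x⟫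
        rw [inner_neg_left, inner_neg_right]
      have hDom' : ∀ x, x ∈ Dom K₂' ↔ -x ∈ Dom K₂ := by
        intro x
        show BddAbove (shadow K₂' x) ↔ BddAbove (shadow K₂ (-x))
        rw [hshadow' x]
      have hsf' : ∀ x, sf K₂' x = sf K₂ (-x) := by
        intro x; rw [sf, sf, hshadow' x]
      have hwin' : ∀ u v w : Euc n, ∃ (z : Euc n) (l ε : ℝ), 0 < l ∧ (ε = 1 ∨ ε = -1) ∧
          ∀ x ∈ sp3 u v w, (x ∈ Dom K₁ ↔ ε • x ∈ Dom K₂') ∧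
            (x ∈ Dom K₁ → sf K₁ x = ⟪z, x⟫ + l * sf K₂' (ε • x)) := by
        intro u v w
        obtain ⟨z1, l1, ε1, hl1, hε1, hrel1⟩ := hwin u v w
        refine ⟨z1, l1, -ε1, hl1, ?_, fun x hx => ?_⟩
        · rcases hε1 with h | h <;> subst h
          · right; norm_num
          · left; norm_num
        · obtain ⟨hi, he⟩ := hrel1 x hx
          constructor
          · rw [hDom' ((-ε1) • x), show -((-ε1) • x) = ε1 • x by module]
            exact hi
          · intro hx1
            rw [hsf' ((-ε1) • x), show -((-ε1) • x) = ε1 • x by module]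
            exact he hx1
      have hne₂' : K₂'.Nonempty := hne₂.image _
      have h2' : -u₀ ∈ Dom K₂' := by
        rw [hDom', neg_neg]
        exact hu₀
      have h3' : -(-u₀) ∉ Dom K₂' := by
        rw [neg_neg]
        intro hc
        exact hnu₀ ((hDom' u₀).mp hc)
      obtain ⟨z', l', hl', hG⟩ := asym_core K₁ K₂' hne₁ hne₂' hwin' (-u₀) h1 h2' h3'
      refine ⟨z', l', -1, hl', Or.inr rfl, fun x => ?_⟩
      obtain ⟨hi, he⟩ := hG x
      constructor
      · rw [show (-1 : ℝ) • x = -x by module, hi, hDom' x]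
      · intro hx1
        rw [show (-1 : ℝ) • x = -x by module, ← hsf' x]
        exact he hx1

end Geom

end HomProj

/-- Closed convex sets `K₁` and `K₂` in `ℝⁿ` are homothetic if and only if, for fixed
`r ≤ m - 3 ≤ n - 4` and a fixed `r`-dimensional subspace `S`, their orthogonal
projections on every `m`-dimensional plane of `ℝⁿ` whose direction contains `S`
are homothetic. -/
theorem homothetic_iff_projections_through_subspace_homothetic_closed
    (n m r : ℕ) (hrm : r + 3 ≤ m) (hmn : m + 1 ≤ n)
    (S : Submodule ℝ (EuclideanSpace ℝ (Fin n))) (hS : Module.finrank ℝ S = r)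
    (K₁ K₂ : Set (EuclideanSpace ℝ (Fin n)))
    (hne₁ : K₁.Nonempty) (hne₂ : K₂.Nonempty)
    (hcl₁ : IsClosed K₁) (hcl₂ : IsClosed K₂)
    (hcv₁ : Convex ℝ K₁) (hcv₂ : Convex ℝ K₂) :
    Homothetic K₁ K₂ ↔
      ∀ (p : EuclideanSpace ℝ (Fin n)) (L : Submodule ℝ (EuclideanSpace ℝ (Fin n))),
        Module.finrank ℝ L = m → S ≤ L →
        Homothetic (planeProj p L '' K₁) (planeProj p L '' K₂) := by
  constructor
  · intro h p L _ _
    exact HomProj.forward_dir K₁ K₂ h p L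
  · intro hyp
    have hwrel := HomProj.wrel_of_rhs hrm hmn S hS K₁ K₂ hne₂ hyp
    obtain ⟨z, l, ε, hl, hε, hglob⟩ := HomProj.backward_core K₁ K₂ hne₁ hne₂ hwrel
    exact HomProj.homothetic_of_glob K₁ K₂ hne₁ hne₂ hcl₁ hcl₂ hcv₁ hcv₂ z l ε hl hε hglob
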